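/- McCarty realizability validates the extensionality axiom: in the realizability structure on well-founded labelled trees, there is a natural number e such that for all trees v, w, if n realizes ∀x (x ε v ↔ x ε w) then e(n) is defined and realizes v = w. -/

import Mathlib

/-- Kleene application: evaluate the partial recursive function with code `n` at `m`. -/
def kapp (n m : ℕ) : Part ℕ := (Denumerable.ofNat Nat.Partrec.Code n).eval m

/-- McCarty's realizability universe: well-founded trees `sup(S)` where `S` is a
set of pairs `(m, v)` with `m ∈ ℕ` and `v` a tree (presented by an indexed family). -/
inductive V : Type 1
  | sup : (I : Type) → (I → ℕ × V) → V

/-- The set of labelled edges into (the root of) a tree. -/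
def V.E : V → Set (ℕ × V)
  | V.sup _ t => Set.range t

mutual
  /-- `RMem n x w`: `n ⊩ x ε w`, i.e. there is `(m, v) ∈ E(w)` with `n₀ = m` and
  `n₁ ⊩ x = v`. -/
  inductive RMem : ℕ → V → V → Prop
    | intro (n : ℕ) (x w v : V) (h : (n.unpair.1, v) ∈ w.E)
        (h2 : REq n.unpair.2 x v) : RMem n x w
  /-- `REq n w w'`: `n ⊩ w = w'`, i.e. for all `(m, v) ∈ E(w)`, `n₀(m)` is defined and
  `n₀(m) ⊩ v ε w'`, and for all `(m', v') ∈ E(w')`, `n₁(m')` is defined and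
  `n₁(m') ⊩ v' ε w`. -/
  inductive REq : ℕ → V → V → Prop
    | intro (n : ℕ) (w w' : V)
        (d1 : ∀ m v, (m, v) ∈ w.E → (kapp n.unpair.1 m).Dom)
        (h1 : ∀ m v (h : (m, v) ∈ w.E),
          RMem ((kapp n.unpair.1 m).get (d1 m v h)) v w')
        (d2 : ∀ m' v', (m', v') ∈ w'.E → (kapp n.unpair.2 m').Dom)
        (h2 : ∀ m' v' (h : (m', v') ∈ w'.E),
          RMem ((kapp n.unpair.2 m').get (d2 m' v' h)) v' w) :
        REq n w w'
end

/-- Kleene realizability of an implication between two abstractly realized statements: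
`n ⊩ φ → ψ` iff for every `m ⊩ φ`, `n(m)` is defined and `n(m) ⊩ ψ`. -/
def RImp (P Q : ℕ → Prop) (n : ℕ) : Prop :=
  ∀ m, P m → ∃ k, k ∈ kapp n m ∧ Q k

open Nat.Partrec (Code)
open Nat.Partrec.Code

-- fixed-point code c with eval c m = some (pair m (pair #c #c))
theorem ex_reflcode : ∃ c : Code, ∀ m : ℕ,
    eval c m = Part.some (Nat.pair m (Nat.pair (Encodable.encode c) (Encodable.encode c))) := by
  obtain ⟨c, hc⟩ := fixed_point₂ (f := fun c m =>
      Part.some (Nat.pair m (Nat.pair (Encodable.encode c) (Encodable.encode c))))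
    (Computable₂.partrec₂ (f := fun c m =>
        (Nat.pair m (Nat.pair (Encodable.encode c) (Encodable.encode c))))
      (Primrec.to_comp <|
        Primrec₂.natPair.comp Primrec.snd
          (Primrec₂.natPair.comp (Primrec.encode.comp .fst) (Primrec.encode.comp .fst))))
  exact ⟨c, fun m => by rw [hc]⟩

noncomputable def rc : Code := ex_reflcode.choose

theorem rc_eval (m : ℕ) : eval rc m =
    Part.some (Nat.pair m (Nat.pair (Encodable.encode rc) (Encodable.encode rc))) :=
  ex_reflcode.choose_spec m

noncomputable def iref : ℕ := Nat.pair (Encodable.encode rc) (Encodable.encode rc)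

theorem kapp_iref1 (m : ℕ) : kapp (Nat.unpair iref).1 m = Part.some (Nat.pair m iref) := by
  unfold kapp iref
  simp [Nat.unpair_pair, Denumerable.ofNat_encode, rc_eval]

theorem kapp_iref2 (m : ℕ) : kapp (Nat.unpair iref).2 m = Part.some (Nat.pair m iref) := by
  unfold kapp iref
  simp [Nat.unpair_pair, Denumerable.ofNat_encode, rc_eval]

theorem rmem_of_edge {m : ℕ} {v w : V} (h : (m, v) ∈ w.E) (hr : REq iref v v) :
    RMem (Nat.pair m iref) v w :=
  RMem.intro _ v w v (by simpa [Nat.unpair_pair] using h) (by simpa [Nat.unpair_pair] using hr)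

theorem V.ind (P : V → Prop)
    (h : ∀ (I : Type) (t : I → ℕ × V), (∀ i, P (t i).2) → P (.sup I t)) : ∀ x, P x :=
  fun x => V.rec (motive_1 := P) (motive_2 := fun p => P p.2)
    (fun I t ih => h I t ih) (fun _ _ hv => hv) x

theorem refl_realized : ∀ x : V, REq iref x x := by
  refine V.ind _ (fun I t ih => ?_)
  refine REq.intro _ _ _ (fun m v _ => ?_) (fun m v h => ?_) (fun m v _ => ?_) (fun m v h => ?_)
  · rw [kapp_iref1]; trivial
  · have : ∃ i, t i = (m, v) := h
    obtain ⟨i, hi⟩ := this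
    have hv : REq iref v v := by have := ih i; rw [hi] at this; exact this
    have := rmem_of_edge h hv
    convert this using 1
    simp [kapp_iref1, Part.get_eq_of_mem]
  · rw [kapp_iref2]; trivial
  · have : ∃ i, t i = (m, v) := h
    obtain ⟨i, hi⟩ := this
    have hv : REq iref v v := by have := ih i; rw [hi] at this; exact this
    have := rmem_of_edge h hv
    convert this using 1
    simp [kapp_iref2, Part.get_eq_of_mem]

theorem REq.of_mem {n : ℕ} {w w' : V}
    (h1 : ∀ m v, (m, v) ∈ w.E → ∃ k, k ∈ kapp n.unpair.1 m ∧ RMem k v w')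
    (h2 : ∀ m v, (m, v) ∈ w'.E → ∃ k, k ∈ kapp n.unpair.2 m ∧ RMem k v w) : REq n w w' := by
  choose f hf hfr using h1
  choose g hg hgr using h2
  refine REq.intro _ _ _ (fun m v h => Part.dom_iff_mem.2 ⟨_, hf m v h⟩) (fun m v h => ?_)
    (fun m v h => Part.dom_iff_mem.2 ⟨_, hg m v h⟩) (fun m v h => ?_)
  · rw [Part.get_eq_of_mem (hf m v h)]; exact hfr m v h
  · rw [Part.get_eq_of_mem (hg m v h)]; exact hgr m v h

theorem ex_dcode : ∃ d : Code, ∀ x : ℕ,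
    eval d x = kapp x.unpair.1 (Nat.pair x.unpair.2 iref) := by
  have : Nat.Partrec (fun x => kapp x.unpair.1 (Nat.pair x.unpair.2 iref)) := by
    have h : Partrec (fun x : ℕ => kapp x.unpair.1 (Nat.pair x.unpair.2 iref)) := by
      unfold kapp
      exact eval_part.comp
        ((Computable.ofNat Code).comp (Computable.fst.comp Computable.unpair))
        (Primrec.to_comp (Primrec₂.natPair.comp (Primrec.snd.comp Primrec.unpair)
          (Primrec.const iref)))
    exact Partrec.nat_iff.1 h
  obtain ⟨d, hd⟩ := exists_code.1 this
  exact ⟨d, fun x => by rw [hd]⟩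

noncomputable def dc : Code := ex_dcode.choose

theorem dc_eval (x : ℕ) : eval dc x = kapp x.unpair.1 (Nat.pair x.unpair.2 iref) :=
  ex_dcode.choose_spec x

theorem ex_ecode : ∃ ec : Code, ∀ n : ℕ,
    eval ec n = Part.some (Nat.pair (Encodable.encode (curry dc n.unpair.1))
      (Encodable.encode (curry dc n.unpair.2))) := by
  have h : Computable (fun n : ℕ => Nat.pair (Encodable.encode (curry dc n.unpair.1))
      (Encodable.encode (curry dc n.unpair.2))) := by
    apply Primrec.to_comp
    exact Primrec₂.natPair.comp
      (Primrec.encode.comp (primrec₂_curry.comp (Primrec.const dc)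
        (Primrec.fst.comp Primrec.unpair)))
      (Primrec.encode.comp (primrec₂_curry.comp (Primrec.const dc)
        (Primrec.snd.comp Primrec.unpair)))
  obtain ⟨ec, hec⟩ := exists_code.1 (Partrec.nat_iff.1 h.partrec)
  exact ⟨ec, fun n => by rw [hec]; rfl⟩

theorem kapp_curry_dc (a m : ℕ) :
    kapp (Encodable.encode (curry dc a)) m = kapp a (Nat.pair m iref) := by
  unfold kapp
  rw [Denumerable.ofNat_encode, eval_curry, dc_eval]
  simp [kapp]

/-- McCarty realizability validates extensionality: there is a natural number `e` such
that for all trees `v, w`, if `n` realizes `∀x (x ε v ↔ x ε w)` (uniform universal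
quantifier, `↔` as the pairing of two implications) then `e(n)` is defined and realizes
`v = w`. -/
theorem extensionality_realized :
    ∃ e : ℕ, ∀ (v w : V) (n : ℕ),
      (∀ x : V,
        RImp (fun m => RMem m x v) (fun k => RMem k x w) n.unpair.1 ∧
        RImp (fun m => RMem m x w) (fun k => RMem k x v) n.unpair.2) →
      ∃ k, k ∈ kapp e n ∧ REq k v w := by
  obtain ⟨ec, hec⟩ := ex_ecode
  refine ⟨Encodable.encode ec, fun v w n H => ?_⟩
  refine ⟨Nat.pair (Encodable.encode (curry dc n.unpair.1))
      (Encodable.encode (curry dc n.unpair.2)), ?_, ?_⟩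
  · unfold kapp; rw [Denumerable.ofNat_encode, hec]; exact Part.mem_some _
  · refine REq.of_mem (fun m x h => ?_) (fun m x h => ?_)
    · rw [Nat.unpair_pair]
      simp only [kapp_curry_dc]
      exact (H x).1 (Nat.pair m iref) (rmem_of_edge h (refl_realized x))
    · rw [Nat.unpair_pair]
      simp only [kapp_curry_dc]
      exact (H x).2 (Nat.pair m iref) (rmem_of_edge h (refl_realized x))
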